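/- For any two distinct positive integers x and y, the only element of VB₂ that fixes the vector (0,x,0,y) is the trivial one: if g ∈ ℤ * (ℤ/2ℤ) and the image of g under the homomorphism sending the generator of ℤ to σ and the generator of ℤ/2ℤ to ρ fixes (0,x,0,y) ∈ ℤ⁴, then g = 1. -/

import Mathlib

/-- For `x : ℤ`, `x⁺ = max x 0`. -/
def pPart (x : ℤ) : ℤ := max x 0

/-- For `x : ℤ`, `x⁻ = min x 0`. -/
def nPart (x : ℤ) : ℤ := min x 0

/-- The map `σ : ℤ⁴ → ℤ⁴`. -/
def sigmaMap : ℤ × ℤ × ℤ × ℤ → ℤ × ℤ × ℤ × ℤ :=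
  fun (a, b, c, d) =>
    let e := a - nPart b - c + pPart d
    (a + pPart b + pPart (pPart d - e), d - pPart e,
      c + nPart d + nPart (nPart b + e), b + pPart e)

/-- The map `σ⁻¹ : ℤ⁴ → ℤ⁴`. -/
def sigmaInvMap : ℤ × ℤ × ℤ × ℤ → ℤ × ℤ × ℤ × ℤ :=
  fun (a, b, c, d) =>
    let f := a + nPart b - c - pPart d
    (a - pPart b - pPart (pPart d + f), d + nPart f,
      c - nPart d - nPart (nPart b - f), b - nPart f)

/-- The map `ρ : ℤ⁴ → ℤ⁴`, `(a,b,c,d) ↦ (c,d,a,b)`. -/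
def rhoMap : ℤ × ℤ × ℤ × ℤ → ℤ × ℤ × ℤ × ℤ :=
  fun (a, b, c, d) => (c, d, a, b)

/- ### Ping-pong sets -/

def Xp (v : ℤ × ℤ × ℤ × ℤ) : Prop :=
  0 < v.1 ∧ v.2.1 ≤ 0 ∧ v.2.2.1 ≤ 0 ∧ 0 < v.2.2.2 ∧ 0 < v.2.1 + v.2.2.2

def Xm (v : ℤ × ℤ × ℤ × ℤ) : Prop :=
  v.1 < 0 ∧ v.2.1 ≤ 0 ∧ 0 ≤ v.2.2.1 ∧ 0 < v.2.2.2 ∧ 0 < v.2.1 + v.2.2.2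

def Yc (v : ℤ × ℤ × ℤ × ℤ) : Prop :=
  (v.1 = 0 ∧ v.2.2.1 = 0 ∧ 0 < v.2.1 ∧ 0 < v.2.2.2) ∨ Xp (rhoMap v) ∨ Xm (rhoMap v)

lemma Xp_sigma {v} (h : Xp v) : Xp (sigmaMap v) := by
  obtain ⟨a,b,c,d⟩ := v
  simp only [Xp, sigmaMap, pPart, nPart, rhoMap] at *
  omega

lemma Xm_sigmaInv {v} (h : Xm v) : Xm (sigmaInvMap v) := by
  obtain ⟨a,b,c,d⟩ := v
  simp only [Xm, sigmaInvMap, pPart, nPart, rhoMap] at *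
  omega

lemma Yc_sigma {v} (h : Yc v) : Xp (sigmaMap v) := by
  obtain ⟨a,b,c,d⟩ := v
  simp only [Yc, Xp, Xm, sigmaMap, pPart, nPart, rhoMap] at *
  omega

lemma Yc_sigmaInv {v} (h : Yc v) : Xm (sigmaInvMap v) := by
  obtain ⟨a,b,c,d⟩ := v
  simp only [Yc, Xp, Xm, sigmaInvMap, pPart, nPart, rhoMap] at *
  omega

lemma sigma_sigmaInv (v) : sigmaMap (sigmaInvMap v) = v := by
  obtain ⟨a,b,c,d⟩ := v
  simp only [sigmaMap, sigmaInvMap, pPart, nPart]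
  refine Prod.ext ?_ (Prod.ext ?_ (Prod.ext ?_ ?_)) <;> simp <;> omega

lemma rho_rho (v) : rhoMap (rhoMap v) = v := rfl

/- ### Reduced words in `ℤ ∗ (ℤ/2)` -/

abbrev VB2G := Monoid.Coprod (Multiplicative ℤ) (Multiplicative (ZMod 2))

def evalW : List (ℤ ⊕ Unit) → VB2G
  | [] => 1
  | (Sum.inl n) :: t => (Monoid.Coprod.inl (Multiplicative.ofAdd n)) * evalW t
  | (Sum.inr _) :: t => (Monoid.Coprod.inr (Multiplicative.ofAdd (1 : ZMod 2))) * evalW t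

def RedW (l : List (ℤ ⊕ Unit)) : Prop :=
  (∀ n, Sum.inl n ∈ l → n ≠ 0) ∧ l.Chain' (fun x y => x.isLeft ≠ y.isLeft)

lemma redW_tail {x t} (h : RedW (x :: t)) : RedW t :=
  ⟨fun n hn => h.1 n (List.mem_cons_of_mem _ hn), (List.isChain_cons.mp h.2).2⟩

lemma exists_red (g : VB2G) : ∃ l, RedW l ∧ evalW l = g := by
  induction g using Monoid.Coprod.induction_on' with
  | one => exact ⟨[], ⟨by simp, List.isChain_nil⟩, rfl⟩
  | inl_mul m x ih =>
    obtain ⟨l, hred, rfl⟩ := ih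
    set mz : ℤ := Multiplicative.toAdd m with hmz
    have hm : m = Multiplicative.ofAdd mz := rfl
    by_cases h0 : mz = 0
    · exact ⟨l, hred, by rw [hm, h0]; simp⟩
    match l with
    | [] =>
      refine ⟨[Sum.inl mz], ⟨?_, ?_⟩, ?_⟩
      · intro n hn; simp at hn; omega
      · exact List.isChain_singleton _
      · simp [evalW, ← hm]
    | Sum.inr u :: t =>
      refine ⟨Sum.inl mz :: Sum.inr u :: t, ⟨?_, ?_⟩, ?_⟩
      · intro n hn; rcases List.mem_cons.mp hn with h | h
        · simp at h; omega
        · exact hred.1 n h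
      · exact List.isChain_cons.mpr ⟨fun y hy => by simp at hy; subst hy; simp, hred.2⟩
      · simp [evalW, ← hm]
    | Sum.inl k :: t =>
      have hk : k ≠ 0 := hred.1 k (by simp)
      have htc : t.Chain' (fun x y => x.isLeft ≠ y.isLeft) := (List.isChain_cons.mp hred.2).2
      have hmerge : (Monoid.Coprod.inl (Multiplicative.ofAdd mz) : VB2G) * evalW (Sum.inl k :: t)
          = (Monoid.Coprod.inl (Multiplicative.ofAdd (mz + k)) : VB2G) * evalW t := by
        rw [evalW, ← mul_assoc, ← map_mul, ← ofAdd_add]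
      by_cases hmk : mz + k = 0
      · refine ⟨t, redW_tail hred, ?_⟩
        rw [hm, hmerge, hmk]; simp
      · refine ⟨Sum.inl (mz + k) :: t, ⟨?_, ?_⟩, ?_⟩
        · intro n hn; rcases List.mem_cons.mp hn with h | h
          · simp at h; omega
          · exact (redW_tail hred).1 n h
        · refine List.isChain_cons.mpr ⟨fun y hy => ?_, htc⟩
          have := (List.isChain_cons.mp hred.2).1 y hy
          simpa using this
        · rw [hm, hmerge]; rfl
  | inr_mul m x ih =>
    obtain ⟨l, hred, rfl⟩ := ih
    have hcases : m = 1 ∨ m = Multiplicative.ofAdd (1 : ZMod 2) := by revert m; decide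
    rcases hcases with rfl | rfl
    · exact ⟨l, hred, by simp⟩
    match l with
    | [] =>
      exact ⟨[Sum.inr ()], ⟨by simp, List.isChain_singleton _⟩, by simp [evalW]⟩
    | Sum.inl k :: t =>
      refine ⟨Sum.inr () :: Sum.inl k :: t, ⟨?_, ?_⟩, rfl⟩
      · intro n hn; rcases List.mem_cons.mp hn with h | h
        · simp at h
        · exact hred.1 n h
      · exact List.isChain_cons.mpr ⟨fun y hy => by simp at hy; subst hy; simp, hred.2⟩
    | Sum.inr u :: t =>
      refine ⟨t, redW_tail hred, ?_⟩
      rw [evalW, ← mul_assoc, ← map_mul, ← ofAdd_add]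
      have h2 : (1 + 1 : ZMod 2) = 0 := by decide
      rw [h2]
      simp

/-- For distinct positive integers `x` and `y`, the only element of
`VB₂ ≅ ℤ * (ℤ/2ℤ)` that fixes the vector `(0,x,0,y) ∈ ℤ⁴` (under the action
sending the generator of `ℤ` to `σ` and the generator of `ℤ/2ℤ` to `ρ`) is the
trivial one. -/
theorem VB2_stabilizer_trivial (x y : ℤ) (hx : 0 < x) (hy : 0 < y) (hxy : x ≠ y)
    (φ : Monoid.Coprod (Multiplicative ℤ) (Multiplicative (ZMod 2)) →*
        Equiv.Perm (ℤ × ℤ × ℤ × ℤ))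
    (hσ : ∀ v, φ (Monoid.Coprod.inl (Multiplicative.ofAdd (1 : ℤ))) v = sigmaMap v)
    (hρ : ∀ v, φ (Monoid.Coprod.inr (Multiplicative.ofAdd (1 : ZMod 2))) v = rhoMap v)
    (g : Monoid.Coprod (Multiplicative ℤ) (Multiplicative (ZMod 2)))
    (hg : φ g (0, x, 0, y) = (0, x, 0, y)) :
    g = 1 := by
  set p0 : ℤ × ℤ × ℤ × ℤ := (0, x, 0, y) with hp0
  set σP : Equiv.Perm (ℤ × ℤ × ℤ × ℤ) :=
    φ (Monoid.Coprod.inl (Multiplicative.ofAdd (1 : ℤ))) with hσP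
  have hσinv : ∀ v, σP⁻¹ v = sigmaInvMap v := by
    intro v
    conv_lhs => rw [show v = σP (sigmaInvMap v) by rw [hσ, sigma_sigmaInv]]
    simp
  -- integer powers of the generator
  have hpow : ∀ n : ℤ, φ (Monoid.Coprod.inl (Multiplicative.ofAdd n)) = σP ^ n := by
    intro n
    have h1 : Multiplicative.ofAdd n = (Multiplicative.ofAdd (1 : ℤ)) ^ n := by
      rw [← ofAdd_zsmul]; norm_num
    rw [h1, map_zpow, map_zpow]
  -- iteration lemmas
  have itXp : ∀ (k : ℕ) (v), Xp v → Xp ((σP ^ k) v) := by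
    intro k
    induction k with
    | zero => intro v h; simpa using h
    | succ k ih =>
      intro v h
      rw [pow_succ]
      have : (σP ^ k * σP) v = (σP ^ k) (σP v) := Equiv.Perm.mul_apply _ _ _
      rw [this, hσ]
      exact ih _ (Xp_sigma h)
  have itXm : ∀ (k : ℕ) (v), Xm v → Xm (((σP⁻¹) ^ k) v) := by
    intro k
    induction k with
    | zero => intro v h; simpa using h
    | succ k ih =>
      intro v h
      rw [pow_succ]
      have : ((σP⁻¹) ^ k * σP⁻¹) v = ((σP⁻¹) ^ k) (σP⁻¹ v) := Equiv.Perm.mul_apply _ _ _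
      rw [this, hσinv]
      exact ih _ (Xm_sigmaInv h)
  have posPow : ∀ n : ℤ, 0 < n → ∀ v, Yc v → Xp ((σP ^ n) v) := by
    intro n hn v hv
    obtain ⟨k, rfl⟩ : ∃ k : ℕ, n = (k : ℤ) + 1 := ⟨(n - 1).toNat, by omega⟩
    have : ((k : ℤ) + 1) = ((k + 1 : ℕ) : ℤ) := by push_cast; ring
    rw [this, zpow_natCast, pow_succ]
    have h2 : (σP ^ k * σP) v = (σP ^ k) (σP v) := Equiv.Perm.mul_apply _ _ _
    rw [h2, hσ]
    exact itXp k _ (Yc_sigma hv)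
  have negPow : ∀ n : ℤ, n < 0 → ∀ v, Yc v → Xm ((σP ^ n) v) := by
    intro n hn v hv
    obtain ⟨k, rfl⟩ : ∃ k : ℕ, n = -((k : ℤ) + 1) := ⟨(-n - 1).toNat, by omega⟩
    have h1 : (-((k : ℤ) + 1)) = -((k + 1 : ℕ) : ℤ) := by push_cast; ring
    rw [h1, zpow_neg, zpow_natCast, ← inv_pow, pow_succ]
    have h2 : ((σP⁻¹) ^ k * σP⁻¹) v = ((σP⁻¹) ^ k) (σP⁻¹ v) := Equiv.Perm.mul_apply _ _ _
    rw [h2, hσinv]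
    exact itXm k _ (Yc_sigmaInv hv)
  -- p0 facts
  have hYp0 : Yc p0 := Or.inl ⟨rfl, rfl, hx, hy⟩
  have hYrp0 : Yc (rhoMap p0) := Or.inl ⟨rfl, rfl, hy, hx⟩
  -- classification of reduced words
  have classify : ∀ l : List (ℤ ⊕ Unit), RedW l →
      l = [] ∨
      (∃ n t, l = Sum.inl n :: t ∧ (Xp (φ (evalW l) p0) ∨ Xm (φ (evalW l) p0))) ∨
      (∃ u t, l = Sum.inr u :: t ∧
        (Xp (rhoMap (φ (evalW l) p0)) ∨ Xm (rhoMap (φ (evalW l) p0)) ∨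
          φ (evalW l) p0 = rhoMap p0)) := by
    intro l
    induction l with
    | nil => intro _; exact Or.inl rfl
    | cons hd t ih =>
      intro hred
      have iht := ih (redW_tail hred)
      cases hd with
      | inl n =>
        have hn : n ≠ 0 := hred.1 n (by simp)
        -- evaluate
        have heval : φ (evalW (Sum.inl n :: t)) p0 = (σP ^ n) (φ (evalW t) p0) := by
          rw [evalW, map_mul, Equiv.Perm.mul_apply, hpow]
        have hYt : Yc (φ (evalW t) p0) := by
          rcases iht with rfl | ⟨m, t', rfl, _⟩ | ⟨u, t', rfl, hz⟩
          · simp only [evalW, map_one, Equiv.Perm.one_apply]; exact hYp0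
          · exfalso
            have := (List.isChain_cons_cons.mp hred.2).1
            simp at this
          · rcases hz with h | h | h
            · exact Or.inr (Or.inl h)
            · exact Or.inr (Or.inr h)
            · rw [h]; exact hYrp0
        refine Or.inr (Or.inl ⟨n, t, rfl, ?_⟩)
        rw [heval]
        rcases lt_or_gt_of_ne hn with h | h
        · exact Or.inr (negPow n h _ hYt)
        · exact Or.inl (posPow n h _ hYt)
      | inr u =>
        have heval : φ (evalW (Sum.inr u :: t)) p0 = rhoMap (φ (evalW t) p0) := by
          rw [evalW, map_mul, Equiv.Perm.mul_apply, hρ]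
        refine Or.inr (Or.inr ⟨u, t, rfl, ?_⟩)
        rw [heval, rho_rho]
        rcases iht with rfl | ⟨m, t', rfl, hz⟩ | ⟨v, t', rfl, _⟩
        · right; right; simp [evalW]
        · rcases hz with h | h
          · exact Or.inl h
          · exact Or.inr (Or.inl h)
        · exfalso
          have := (List.isChain_cons_cons.mp hred.2).1
          simp at this
  -- conclude
  obtain ⟨l, hred, rfl⟩ := exists_red g
  rcases classify l hred with rfl | ⟨n, t, rfl, h⟩ | ⟨u, t, rfl, h⟩
  · rfl
  · exfalso
    rw [hg] at h
    rcases h with h | h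
    · have := h.1; simp [hp0] at this
    · have := h.1; simp [hp0] at this
  · exfalso
    rw [hg] at h
    rcases h with h | h | h
    · have := h.1; simp [hp0, rhoMap] at this
    · have := h.1; simp [hp0, rhoMap] at this
    · have : x = y := congrArg (fun v => v.2.1) h
      exact hxy this
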